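/- arXiv:2211.07949 — 4 statements merged into one kernel-verified Lean document; each statement's English description precedes it below -/
import Mathlib

section
/- Let T ≥ 1, let S ⪰ 0 and W ⪰ 0 be n×n real symmetric matrices with W̃ the PSD square root of W, and let Q₁,…,Q_T be n×n real matrices with ∑_{t=1}^T Q_tᵀ Q_t ⪯ I. Then for every sequence X₁,…,X_T of positive semidefinite matrices with X₁ + S ≻ 0, the cost J_T = ∑_{t=1}^T [tr(W X̄_t⁻¹) + tr(X_t)], where X̄_t = ∑_{k=1}^t X_k + tS, satisfies J_T ≥ -2 ∑_{t=1}^T tr(Q_t W̃) - ∑_{t=1}^T t · tr(Q_t S Q_tᵀ). -/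
open Matrix BigOperators Finset Real


lemma aux_psd_decomp {n : ℕ} {A : Matrix (Fin n) (Fin n) ℝ} (hA : A.PosSemidef) :
    ∃ B : Matrix (Fin n) (Fin n) ℝ, A = Bᴴ * B := by
  classical
  open scoped MatrixOrder in
  obtain ⟨X, hX, -, hXA⟩ :=
    CFC.exists_sqrt_of_isSelfAdjoint_of_quasispectrumRestricts hA.isHermitian
      (QuasispectrumRestricts.nnreal_of_nonneg hA.nonneg)
  refine ⟨X, ?_⟩
  have hXH : Xᴴ = X := hX
  rw [hXH, hXA]

lemma aux_trace_nonneg {n : ℕ} {A : Matrix (Fin n) (Fin n) ℝ} (hA : A.PosSemidef) :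
    0 ≤ A.trace := by
  obtain ⟨B, rfl⟩ := aux_psd_decomp hA
  rw [Matrix.trace]
  refine Finset.sum_nonneg fun i _ => ?_
  simp only [Matrix.diag, Matrix.mul_apply, Matrix.conjTranspose_apply, star_trivial]
  exact Finset.sum_nonneg fun k _ => mul_self_nonneg _

lemma aux_trace_mul_nonneg {n : ℕ} {A B : Matrix (Fin n) (Fin n) ℝ}
    (hA : A.PosSemidef) (hB : B.PosSemidef) : 0 ≤ (A * B).trace := by
  obtain ⟨C, rfl⟩ := aux_psd_decomp hA
  rw [Matrix.mul_assoc, Matrix.trace_mul_comm]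
  exact aux_trace_nonneg (by simpa using hB.mul_mul_conjTranspose_same C)

lemma aux_smul_psd {n : ℕ} {c : ℝ} {A : Matrix (Fin n) (Fin n) ℝ}
    (hc : 0 ≤ c) (hA : A.PosSemidef) : (c • A).PosSemidef := by
  refine ⟨?_, fun x => ?_⟩
  · show (c • A)ᴴ = c • A
    rw [Matrix.conjTranspose_smul, hA.1, star_trivial]
  · have := hA.2 x
    exact (hA.smul hc).2 x

lemma aux_sum_psd {n : ℕ} (s : Finset ℕ) (X : ℕ → Matrix (Fin n) (Fin n) ℝ)
    (hX : ∀ k ∈ s, (X k).PosSemidef) : (∑ k ∈ s, X k).PosSemidef :=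
  Finset.sum_induction X _ (fun _ _ ha hb => ha.add hb) Matrix.PosSemidef.zero hX

lemma aux_key {n : ℕ} (M Wt Qt : Matrix (Fin n) (Fin n) ℝ) (hM : M.PosDef) (hWt : Wt.PosSemidef) :
    -2 * (Qt * Wt).trace - (Qt * M * Qtᵀ).trace ≤ (Wt * Wt * M⁻¹).trace := by
  have hdet : IsUnit M.det := isUnit_iff_ne_zero.mpr hM.det_pos.ne'
  have h1 : M⁻¹ * M = 1 := Matrix.nonsing_inv_mul M hdet
  have h2 : M * M⁻¹ = 1 := Matrix.mul_nonsing_inv M hdet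
  have hMH : Mᴴ = M := hM.1
  have hWH : Wtᴴ = Wt := hWt.1
  have hstep : (Wt + Qt * M) * M⁻¹ = Wt * M⁻¹ + Qt := by
    rw [add_mul, mul_assoc, h2, mul_one]
  have hexp : (Wt + Qt * M) * M⁻¹ * (Wt + Qt * M)ᴴ
      = Wt * M⁻¹ * Wt + Wt * M⁻¹ * (M * Qtᴴ) + (Qt * Wt + Qt * (M * Qtᴴ)) := by
    rw [hstep, Matrix.conjTranspose_add, Matrix.conjTranspose_mul, hMH, hWH,
      add_mul, mul_add, mul_add]
  have e1 : Wt * M⁻¹ * (M * Qtᴴ) = Wt * Qtᴴ := by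
    rw [mul_assoc Wt, ← mul_assoc M⁻¹, h1, one_mul]
  have e2 : Qt * (M * Qtᴴ) = Qt * M * Qtᴴ := (mul_assoc _ _ _).symm
  rw [e1, e2] at hexp
  have h0 : 0 ≤ ((Wt + Qt * M) * M⁻¹ * (Wt + Qt * M)ᴴ).trace :=
    aux_trace_nonneg ((hM.inv.posSemidef).mul_mul_conjTranspose_same (Wt + Qt * M))
  rw [hexp, Matrix.trace_add, Matrix.trace_add, Matrix.trace_add] at h0
  have hWT : Wtᵀ = Wt := by rw [← Matrix.conjTranspose_eq_transpose_of_trivial, hWH]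
  have e3 : (Wt * Qtᴴ).trace = (Qt * Wt).trace := by
    rw [Matrix.conjTranspose_eq_transpose_of_trivial,
      ← Matrix.trace_transpose (Wt * Qtᵀ), Matrix.transpose_mul,
      Matrix.transpose_transpose, hWT]
  have e4 : (Wt * M⁻¹ * Wt).trace = (Wt * Wt * M⁻¹).trace := Matrix.trace_mul_cycle Wt M⁻¹ Wt
  have e5 : (Qt * M * Qtᴴ).trace = (Qt * M * Qtᵀ).trace := by
    rw [Matrix.conjTranspose_eq_transpose_of_trivial]
  rw [e3, e4, e5] at h0
  linarith

theorem stmt_9 (n T : ℕ) (hT : 1 ≤ T)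
    (S W Wt : Matrix (Fin n) (Fin n) ℝ)
    (hS : S.PosSemidef) (hW : W.PosSemidef) (hWt : Wt.PosSemidef)
    (hWtsq : Wt * Wt = W)
    (Q : ℕ → Matrix (Fin n) (Fin n) ℝ)
    (hQ : ((1 : Matrix (Fin n) (Fin n) ℝ)
        - ∑ t ∈ Finset.Icc 1 T, (Q t)ᵀ * Q t).PosSemidef)
    (X : ℕ → Matrix (Fin n) (Fin n) ℝ)
    (hX : ∀ t ∈ Finset.Icc 1 T, (X t).PosSemidef)
    (hX1S : (X 1 + S).PosDef) :
    -2 * ∑ t ∈ Finset.Icc 1 T, (Q t * Wt).trace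
      - ∑ t ∈ Finset.Icc 1 T, (t:ℝ) * (Q t * S * (Q t)ᵀ).trace
    ≤ ∑ t ∈ Finset.Icc 1 T,
        ((W * ((∑ k ∈ Finset.Icc 1 t, X k) + (t:ℝ) • S)⁻¹).trace + (X t).trace) := by
  have hMpd : ∀ t ∈ Finset.Icc 1 T,
      ((∑ k ∈ Finset.Icc 1 t, X k) + (t:ℝ) • S).PosDef := by
    intro t ht
    obtain ⟨ht1, htT⟩ := Finset.mem_Icc.mp ht
    have h1mem : 1 ∈ Finset.Icc 1 t := Finset.mem_Icc.mpr ⟨le_refl 1, ht1⟩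
    have hs : ∑ k ∈ Finset.Icc 1 t, X k
        = X 1 + ∑ k ∈ (Finset.Icc 1 t).erase 1, X k :=
      (Finset.add_sum_erase _ X h1mem).symm
    have hsm : (t:ℝ) • S = S + ((t - 1 : ℕ):ℝ) • S := by
      have hc : (t:ℝ) = 1 + ((t - 1 : ℕ):ℝ) := by
        rw [Nat.cast_sub ht1]; ring
      rw [hc, add_smul, one_smul]
    have hrw : (∑ k ∈ Finset.Icc 1 t, X k) + (t:ℝ) • S
        = (X 1 + S) + ((∑ k ∈ (Finset.Icc 1 t).erase 1, X k) + ((t - 1 : ℕ):ℝ) • S) := by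
      rw [hs, hsm]; abel
    rw [hrw]
    refine hX1S.add_posSemidef (Matrix.PosSemidef.add ?_ (aux_smul_psd (Nat.cast_nonneg _) hS))
    refine aux_sum_psd _ X fun k hkmem => ?_
    have := Finset.mem_erase.mp hkmem
    exact hX k (Finset.mem_Icc.mpr ⟨(Finset.mem_Icc.mp this.2).1,
      le_trans (Finset.mem_Icc.mp this.2).2 htT⟩)
  -- per-t key inequality, summed
  have hsum1 : -2 * ∑ t ∈ Finset.Icc 1 T, (Q t * Wt).trace
      - ∑ t ∈ Finset.Icc 1 T,
          (Q t * ((∑ k ∈ Finset.Icc 1 t, X k) + (t:ℝ) • S) * (Q t)ᵀ).trace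
      ≤ ∑ t ∈ Finset.Icc 1 T,
          (W * ((∑ k ∈ Finset.Icc 1 t, X k) + (t:ℝ) • S)⁻¹).trace := by
    rw [Finset.mul_sum, ← Finset.sum_sub_distrib]
    refine Finset.sum_le_sum fun t ht => ?_
    rw [← hWtsq]
    exact aux_key _ _ _ (hMpd t ht) hWt
  -- expand the quadratic term
  have hBt : ∀ t ∈ Finset.Icc 1 T,
      (Q t * ((∑ k ∈ Finset.Icc 1 t, X k) + (t:ℝ) • S) * (Q t)ᵀ).trace
      = (∑ k ∈ Finset.Icc 1 t, ((Q t)ᵀ * Q t * X k).trace)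
        + (t:ℝ) * (Q t * S * (Q t)ᵀ).trace := by
    intro t _
    have hmat : Q t * ((∑ k ∈ Finset.Icc 1 t, X k) + (t:ℝ) • S) * (Q t)ᵀ
        = (∑ k ∈ Finset.Icc 1 t, Q t * X k * (Q t)ᵀ) + (t:ℝ) • (Q t * S * (Q t)ᵀ) := by
      rw [mul_add, add_mul, Matrix.mul_smul, Matrix.smul_mul, Finset.mul_sum, Finset.sum_mul]
    rw [hmat, Matrix.trace_add, Matrix.trace_sum, Matrix.trace_smul, smul_eq_mul]
    congr 1
    exact Finset.sum_congr rfl fun k _ => Matrix.trace_mul_cycle (Q t) (X k) (Q t)ᵀ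
  have hsum2 : ∑ t ∈ Finset.Icc 1 T,
      (Q t * ((∑ k ∈ Finset.Icc 1 t, X k) + (t:ℝ) • S) * (Q t)ᵀ).trace
      = (∑ t ∈ Finset.Icc 1 T, ∑ k ∈ Finset.Icc 1 t, ((Q t)ᵀ * Q t * X k).trace)
        + ∑ t ∈ Finset.Icc 1 T, (t:ℝ) * (Q t * S * (Q t)ᵀ).trace := by
    rw [← Finset.sum_add_distrib]
    exact Finset.sum_congr rfl hBt
  -- swap the double sum
  have hswap : ∑ t ∈ Finset.Icc 1 T, ∑ k ∈ Finset.Icc 1 t, ((Q t)ᵀ * Q t * X k).trace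
      = ∑ k ∈ Finset.Icc 1 T, ∑ t ∈ Finset.Icc k T, ((Q t)ᵀ * Q t * X k).trace := by
    have h := Finset.sum_Ico_Ico_comm 1 (T + 1) (fun i j => ((Q j)ᵀ * Q j * X i).trace)
    simp only [← Finset.Ico_add_one_right_eq_Icc]
    exact h.symm
  -- per-k bound
  have hk : ∀ k ∈ Finset.Icc 1 T,
      ∑ t ∈ Finset.Icc k T, ((Q t)ᵀ * Q t * X k).trace ≤ (X k).trace := by
    intro k hkm
    obtain ⟨hk1, hkT⟩ := Finset.mem_Icc.mp hkm
    have hA : ∑ t ∈ Finset.Icc k T, ((Q t)ᵀ * Q t * X k).trace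
        = ((∑ t ∈ Finset.Icc k T, (Q t)ᵀ * Q t) * X k).trace := by
      rw [Finset.sum_mul, Matrix.trace_sum]
    have hIoc : ∀ a b : ℕ, 1 ≤ a → Finset.Icc a b = Finset.Ioc (a - 1) b := by
      intro a b ha; ext x; simp only [Finset.mem_Icc, Finset.mem_Ioc]; omega
    have hsplit : (∑ t ∈ Finset.Icc 1 T, (Q t)ᵀ * Q t)
        = (∑ t ∈ Finset.Icc 1 (k - 1), (Q t)ᵀ * Q t)
          + ∑ t ∈ Finset.Icc k T, (Q t)ᵀ * Q t := by
      rw [hIoc 1 T le_rfl, hIoc 1 (k - 1) le_rfl, hIoc k T hk1]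
      simp only [Nat.sub_self]
      exact (Finset.sum_Ioc_consecutive _ (Nat.zero_le _) (by omega)).symm
    have hpsd1 : ((1 : Matrix (Fin n) (Fin n) ℝ)
        - ∑ t ∈ Finset.Icc k T, (Q t)ᵀ * Q t).PosSemidef := by
      have hre : (1 : Matrix (Fin n) (Fin n) ℝ) - ∑ t ∈ Finset.Icc k T, (Q t)ᵀ * Q t
          = ((1 : Matrix (Fin n) (Fin n) ℝ) - ∑ t ∈ Finset.Icc 1 T, (Q t)ᵀ * Q t)
            + ∑ t ∈ Finset.Icc 1 (k - 1), (Q t)ᵀ * Q t := by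
        rw [hsplit]; abel
      rw [hre]
      refine hQ.add (aux_sum_psd _ _ fun t _ => ?_)
      have := Matrix.posSemidef_conjTranspose_mul_self (Q t)
      rwa [Matrix.conjTranspose_eq_transpose_of_trivial] at this
    have h0 : 0 ≤ (((1 : Matrix (Fin n) (Fin n) ℝ)
        - ∑ t ∈ Finset.Icc k T, (Q t)ᵀ * Q t) * X k).trace :=
      aux_trace_mul_nonneg hpsd1 (hX k hkm)
    rw [Matrix.sub_mul, Matrix.one_mul, Matrix.trace_sub] at h0
    linarith [hA]
  have hD : ∑ t ∈ Finset.Icc 1 T, ∑ k ∈ Finset.Icc 1 t, ((Q t)ᵀ * Q t * X k).trace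
      ≤ ∑ k ∈ Finset.Icc 1 T, (X k).trace := by
    rw [hswap]; exact Finset.sum_le_sum hk
  rw [Finset.sum_add_distrib]
  rw [hsum2] at hsum1
  linarith
end

section
/- Let T ≥ 1, W ⪰ 0 an n×n real symmetric matrix with PSD square root W̃, S ⪰ 0 singular, and let {n_j}_{j=1}^m be an orthonormal basis of the null space of S. Then every feasible sequence X₁,…,X_T (X_t ⪰ 0, X₁ + S ≻ 0) satisfies J_T ≥ 2√T · ∑_{j=1}^m n_jᵀ W̃ n_j, where J_T = ∑_{t=1}^T [tr(W X̄_t⁻¹) + tr(X_t)] with X̄_t = ∑_{k=1}^t X_k + tS. -/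
open Matrix BigOperators Finset Real

lemma aux_vmv_vmv {n : ℕ} (a b c d : Fin n → ℝ) :
    vecMulVec a b * vecMulVec c d = (b ⬝ᵥ c) • vecMulVec a d := by
  ext i k
  simp only [Matrix.mul_apply, vecMulVec_apply, Matrix.smul_apply, dotProduct, smul_eq_mul,
    Finset.sum_mul]
  exact Finset.sum_congr rfl fun l _ => by ring

lemma aux_mul_vmv {n : ℕ} (M : Matrix (Fin n) (Fin n) ℝ) (a b : Fin n → ℝ) :
    M * vecMulVec a b = vecMulVec (M *ᵥ a) b := by
  ext i k
  simp only [Matrix.mul_apply, vecMulVec_apply, Matrix.mulVec, dotProduct, Finset.sum_mul]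
  exact Finset.sum_congr rfl fun l _ => by ring

lemma aux_trace_vmv {n : ℕ} (a b : Fin n → ℝ) :
    (vecMulVec a b).trace = a ⬝ᵥ b := by
  simp [Matrix.trace, vecMulVec_apply, dotProduct]

lemma aux_ct_vmv {n : ℕ} (a b : Fin n → ℝ) :
    (vecMulVec a b)ᴴ = vecMulVec b a := by
  ext i k
  simp [conjTranspose_apply, vecMulVec_apply, mul_comm]

theorem stmt_10 (n m T : ℕ) (hT : 1 ≤ T)
    (S W Wt : Matrix (Fin n) (Fin n) ℝ)
    (hS : S.PosSemidef) (hSsing : S.det = 0)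
    (hW : W.PosSemidef) (hWt : Wt.PosSemidef) (hWtsq : Wt * Wt = W)
    (nv : Fin m → (Fin n → ℝ))
    (hon : ∀ j j', nv j ⬝ᵥ nv j' = if j = j' then 1 else 0)
    (hker : ∀ j, S *ᵥ nv j = 0)
    (hspan : ∀ v : Fin n → ℝ, S *ᵥ v = 0 → v ∈ Submodule.span ℝ (Set.range nv))
    (X : ℕ → Matrix (Fin n) (Fin n) ℝ)
    (hX : ∀ t ∈ Finset.Icc 1 T, (X t).PosSemidef)
    (hX1S : (X 1 + S).PosDef) :
    2 * Real.sqrt T * ∑ j, nv j ⬝ᵥ (Wt *ᵥ nv j)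
    ≤ ∑ t ∈ Finset.Icc 1 T,
        ((W * ((∑ k ∈ Finset.Icc 1 t, X k) + (t:ℝ) • S)⁻¹).trace + (X t).trace) := by
  have hT0 : (0:ℝ) < T := by exact_mod_cast hT
  set G : ℝ := ∑ j, nv j ⬝ᵥ (Wt *ᵥ nv j) with hG
  set c : ℝ := (Real.sqrt T)⁻¹ with hc
  have hsqpos : 0 < Real.sqrt T := Real.sqrt_pos.mpr hT0
  have hsq : Real.sqrt T * Real.sqrt T = (T:ℝ) := Real.mul_self_sqrt hT0.le
  have hTc : (T:ℝ) * c = Real.sqrt T := by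
    rw [hc, ← div_eq_mul_inv, div_eq_iff hsqpos.ne', hsq]
  have hc2 : c * c = (T:ℝ)⁻¹ := by
    rw [hc, ← mul_inv, hsq]
  set P : Matrix (Fin n) (Fin n) ℝ := ∑ j, vecMulVec (nv j) (nv j) with hP
  have hPH : Pᴴ = P := by
    rw [hP, conjTranspose_sum]
    exact Finset.sum_congr rfl fun j _ => aux_ct_vmv _ _
  have hPP : P * P = P := by
    rw [hP, Finset.sum_mul]
    refine Finset.sum_congr rfl fun j _ => ?_
    rw [Finset.mul_sum]
    have : ∀ j' : Fin m, vecMulVec (nv j) (nv j) * vecMulVec (nv j') (nv j')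
        = if j' = j then vecMulVec (nv j) (nv j) else 0 := by
      intro j'
      rw [aux_vmv_vmv, hon]
      by_cases h : j = j' <;> simp [h, eq_comm]
    simp [this]
  have hSP : S * P = 0 := by
    rw [hP, Finset.mul_sum]
    refine Finset.sum_eq_zero fun j _ => ?_
    rw [aux_mul_vmv, hker]
    ext i k; simp [vecMulVec_apply]
  -- trace of Wt * P
  have htrWtP : (Wt * P).trace = G := by
    rw [hP, Finset.mul_sum, trace_sum]
    refine Finset.sum_congr rfl fun j _ => ?_
    rw [aux_mul_vmv, aux_trace_vmv, dotProduct_comm]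
  have hC0 : ∀ k ∈ Finset.Icc 1 T, 0 ≤ (X k).trace :=
    fun k hk => aux_trace_nonneg (hX k hk)
  set C : ℝ := ∑ k ∈ Finset.Icc 1 T, (X k).trace with hCdef
  -- trace (X k * P) ≤ trace (X k)
  have htrXP : ∀ k ∈ Finset.Icc 1 T, (X k * P).trace ≤ (X k).trace := by
    intro k hk
    have hE : (1 - P) * (1 - P) = 1 - P := by
      rw [sub_mul, mul_sub, mul_sub, hPP]; simp
    have hEH : (1 - P)ᴴ = 1 - P := by rw [conjTranspose_sub, hPH, conjTranspose_one]
    have hpsd : ((1 - P)ᴴ * X k * (1 - P)).PosSemidef :=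
      (hX k hk).conjTranspose_mul_mul_same _
    rw [hEH] at hpsd
    have h0 : 0 ≤ ((1 - P) * X k * (1 - P)).trace := aux_trace_nonneg hpsd
    have heq : ((1 - P) * X k * (1 - P)).trace = (X k).trace - (X k * P).trace := by
      rw [trace_mul_comm, ← mul_assoc, hE, trace_mul_comm, mul_sub, mul_one, trace_sub]
    linarith [heq ▸ h0]
  -- positive definiteness of the Y_t
  have hYpd : ∀ t, 1 ≤ t → t ≤ T →
      ((∑ k ∈ Finset.Icc 1 t, X k) + (t:ℝ) • S).PosDef := by
    intro t ht1 htT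
    induction t, ht1 using Nat.le_induction with
    | base => simpa using hX1S
    | succ t ht ih =>
      have htT' : t ≤ T := by omega
      have := ih htT'
      have hsum : (∑ k ∈ Finset.Icc 1 (t+1), X k) + ((t+1:ℕ):ℝ) • S
          = ((∑ k ∈ Finset.Icc 1 t, X k) + (t:ℝ) • S) + (X (t+1) + S) := by
        rw [Finset.sum_Icc_succ_top (by omega : 1 ≤ t + 1)]
        push_cast
        module
      rw [hsum]
      exact this.add_posSemidef ((hX (t+1) (by simp; omega)).add hS)
  -- the key per-t inequality
  have key : ∀ t ∈ Finset.Icc 1 T,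
      2 * c * G - (T:ℝ)⁻¹ * C + (X t).trace
      ≤ (W * ((∑ k ∈ Finset.Icc 1 t, X k) + (t:ℝ) • S)⁻¹).trace + (X t).trace := by
    intro t ht
    simp only [Finset.mem_Icc] at ht
    set Y : Matrix (Fin n) (Fin n) ℝ := (∑ k ∈ Finset.Icc 1 t, X k) + (t:ℝ) • S with hY
    have hYp : Y.PosDef := hYpd t ht.1 ht.2
    have hdet : Y.det ≠ 0 := hYp.det_pos.ne'
    have hYB : Y * Y⁻¹ = 1 := mul_nonsing_inv _ (isUnit_iff_ne_zero.mpr hdet)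
    have hBY : Y⁻¹ * Y = 1 := nonsing_inv_mul _ (isUnit_iff_ne_zero.mpr hdet)
    have hBH : (Y⁻¹)ᴴ = Y⁻¹ := by rw [conjTranspose_nonsing_inv, hYp.isHermitian.eq]
    set R : Matrix (Fin n) (Fin n) ℝ := Y⁻¹ * Wt - c • P with hR
    have hRH : Rᴴ = Wt * Y⁻¹ - c • P := by
      rw [hR, conjTranspose_sub, conjTranspose_mul, hBH, hWt.1.eq, conjTranspose_smul,
        hPH, star_trivial]
    have hpsd : (Rᴴ * Y * R).PosSemidef := hYp.posSemidef.conjTranspose_mul_mul_same _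
    have h0 : 0 ≤ (Rᴴ * Y * R).trace := aux_trace_nonneg hpsd
    have eYR : Y * R = Wt - c • (Y * P) := by
      rw [hR, mul_sub, ← mul_assoc, hYB, one_mul, mul_smul_comm]
    have hexp : Rᴴ * Y * R
        = Wt * Y⁻¹ * Wt - c • (Wt * P) - c • (P * Wt) + (c * c) • (P * (Y * P)) := by
      rw [mul_assoc, eYR, hRH]
      rw [sub_mul, mul_sub, mul_sub, mul_smul_comm, mul_smul_comm,
          smul_mul_assoc, smul_mul_assoc, smul_smul]
      have e4 : Wt * Y⁻¹ * (Y * P) = Wt * P := by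
        rw [mul_assoc, ← mul_assoc Y⁻¹ Y P, hBY, one_mul]
      rw [e4]
      abel
    have htr : (Rᴴ * Y * R).trace
        = (W * Y⁻¹).trace - 2 * c * G + (c * c) * (Y * P).trace := by
      rw [hexp, trace_add, trace_sub, trace_sub, trace_smul, trace_smul, trace_smul]
      have t1 : (Wt * Y⁻¹ * Wt).trace = (W * Y⁻¹).trace := by
        rw [trace_mul_comm, ← mul_assoc, hWtsq]
      have t2 : (P * Wt).trace = G := by rw [trace_mul_comm, htrWtP]
      have t3 : (P * (Y * P)).trace = (Y * P).trace := by
        rw [trace_mul_comm, mul_assoc, hPP]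
      rw [t1, t2, htrWtP, t3]
      simp only [smul_eq_mul]
      ring
    have hYPtr : (Y * P).trace ≤ C := by
      have hYP : Y * P = ∑ k ∈ Finset.Icc 1 t, (X k * P) := by
        rw [hY, add_mul, smul_mul_assoc, hSP, Finset.sum_mul]
        simp
      rw [hYP, trace_sum, hCdef]
      calc ∑ k ∈ Finset.Icc 1 t, (X k * P).trace
          ≤ ∑ k ∈ Finset.Icc 1 t, (X k).trace := by
            refine Finset.sum_le_sum fun k hk => ?_
            simp only [Finset.mem_Icc] at hk
            exact htrXP k (Finset.mem_Icc.mpr ⟨hk.1, le_trans hk.2 ht.2⟩)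
        _ ≤ ∑ k ∈ Finset.Icc 1 T, (X k).trace := by
            refine Finset.sum_le_sum_of_subset_of_nonneg ?_ (fun k hk _ => hC0 k hk)
            exact Finset.Icc_subset_Icc le_rfl ht.2
    have hcc : 0 ≤ c * c := mul_self_nonneg c
    have := htr ▸ h0
    have hb : (c * c) * (Y * P).trace ≤ (T:ℝ)⁻¹ * C := by
      rw [hc2]
      exact mul_le_mul_of_nonneg_left hYPtr (by positivity)
    have : 2 * c * G - (T:ℝ)⁻¹ * C ≤ (W * Y⁻¹).trace := by
      nlinarith [hc2 ▸ hcc]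
    linarith
  -- put it together
  calc 2 * Real.sqrt T * G
      = ∑ _t ∈ Finset.Icc 1 T, (2 * c * G - (T:ℝ)⁻¹ * C) + C := by
        rw [Finset.sum_const, Nat.card_Icc, Nat.add_sub_cancel, nsmul_eq_mul]
        have h1 : (T:ℝ) * (2 * c * G - (T:ℝ)⁻¹ * C) = 2 * Real.sqrt T * G - C := by
          rw [mul_sub]
          congr 1
          · rw [← mul_assoc, ← mul_assoc, mul_comm (T:ℝ) 2, mul_assoc 2 (T:ℝ) c, hTc]
          · rw [← mul_assoc, mul_inv_cancel₀ hT0.ne', one_mul]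
        rw [h1]
        ring
    _ ≤ ∑ t ∈ Finset.Icc 1 T,
          ((W * ((∑ k ∈ Finset.Icc 1 t, X k) + (t:ℝ) • S)⁻¹).trace + (X t).trace) := by
        have h1 : ∑ t ∈ Finset.Icc 1 T, (2 * c * G - (T:ℝ)⁻¹ * C) + C
            = ∑ t ∈ Finset.Icc 1 T, ((2 * c * G - (T:ℝ)⁻¹ * C) + (X t).trace) := by
          rw [Finset.sum_add_distrib]
        rw [h1]
        exact Finset.sum_le_sum key
end

section
/- Let T ≥ 1, and let S ≻ 0, W ≻ 0 be n×n real symmetric matrices. Set α_T = ∑_{t=1}^T 1/t, β_T = ∑_{t=1}^T 1/t², c_T = 1/(β_T λ_max(S⁻¹WS⁻¹)), and J* = tr(WS⁻¹). Then every feasible sequence X₁,…,X_T (X_t ⪰ 0) satisfies J_T ≥ (2 - c_T)·c_T·α_T·J*, where J_T = ∑_{t=1}^T [tr(W X̄_t⁻¹) + tr(X_t)] with X̄_t = ∑_{k=1}^t X_k + tS. -/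
open Matrix BigOperators Finset Real

section Aux

variable {n : ℕ}

open scoped MatrixOrder in
noncomputable def Matrix.PosSemidef.sqrt {A : Matrix (Fin n) (Fin n) ℝ} (_hA : A.PosSemidef) :
    Matrix (Fin n) (Fin n) ℝ := CFC.sqrt A

open scoped MatrixOrder in
lemma Matrix.PosSemidef.posSemidef_sqrt {A : Matrix (Fin n) (Fin n) ℝ} (hA : A.PosSemidef) :
    hA.sqrt.PosSemidef := Matrix.nonneg_iff_posSemidef.mp (CFC.sqrt_nonneg A)

open scoped MatrixOrder in
lemma Matrix.PosSemidef.sqrt_mul_self {A : Matrix (Fin n) (Fin n) ℝ} (hA : A.PosSemidef) :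
    hA.sqrt * hA.sqrt = A := CFC.sqrt_mul_sqrt_self A hA.nonneg

lemma auxA_trace_nonneg {M : Matrix (Fin n) (Fin n) ℝ} (hM : M.PosSemidef) :
    0 ≤ M.trace := by
  rw [Matrix.trace]
  refine Finset.sum_nonneg fun i _ => ?_
  have := hM.dotProduct_mulVec_nonneg (Pi.single i 1)
  simpa [dotProduct, Matrix.mulVec, Pi.single_apply] using this

lemma auxA_trace_mul_nonneg {A B : Matrix (Fin n) (Fin n) ℝ} (hA : A.PosSemidef)
    (hB : B.PosSemidef) : 0 ≤ (A * B).trace := by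
  have h2 := hB.mul_mul_conjTranspose_same hA.sqrt
  rw [hA.posSemidef_sqrt.isHermitian.eq] at h2
  have h3 := auxA_trace_nonneg h2
  rwa [Matrix.trace_mul_cycle, hA.sqrt_mul_self] at h3

lemma auxA_smul_sub_posSemidef {M : Matrix (Fin n) (Fin n) ℝ} (hM : M.IsHermitian) {lam : ℝ}
    (hlam : ∀ i, hM.eigenvalues i ≤ lam) :
    (lam • (1 : Matrix (Fin n) (Fin n) ℝ) - M).PosSemidef := by
  have hU : (hM.eigenvectorUnitary : Matrix (Fin n) (Fin n) ℝ) *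
      (star hM.eigenvectorUnitary : Matrix (Fin n) (Fin n) ℝ) = 1 :=
    (Matrix.mem_unitaryGroup_iff).mp hM.eigenvectorUnitary.2
  have key : lam • (1 : Matrix (Fin n) (Fin n) ℝ) - M =
      (hM.eigenvectorUnitary : Matrix (Fin n) (Fin n) ℝ) *
        (Matrix.diagonal fun i => lam - hM.eigenvalues i) *
        (star hM.eigenvectorUnitary : Matrix (Fin n) (Fin n) ℝ) := by
    have hd : (Matrix.diagonal fun i => lam - hM.eigenvalues i) =
        lam • (1 : Matrix (Fin n) (Fin n) ℝ) -
          Matrix.diagonal (RCLike.ofReal ∘ hM.eigenvalues) := by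
      ext i j
      by_cases h : i = j <;>
        simp [Matrix.diagonal_apply, Matrix.one_apply, h, Function.comp]
    rw [hd, Matrix.mul_sub, Matrix.sub_mul]
    rw [Matrix.mul_smul, Matrix.smul_mul, Matrix.mul_one, hU, ← Unitary.conjStarAlgAut_apply (S := ℝ), ← hM.spectral_theorem]
  rw [key]
  have hdpsd : (Matrix.diagonal fun i => lam - hM.eigenvalues i).PosSemidef :=
    Matrix.PosSemidef.diagonal fun i => sub_nonneg.2 (hlam i)
  have := hdpsd.mul_mul_conjTranspose_same
    (hM.eigenvectorUnitary : Matrix (Fin n) (Fin n) ℝ)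
  rwa [← Matrix.star_eq_conjTranspose] at this

lemma auxA_smul_posDef {S : Matrix (Fin n) (Fin n) ℝ} (hS : S.PosDef) {r : ℝ} (hr : 0 < r) :
    (r • S).PosDef := by
  refine ⟨?_, fun x hx => ?_⟩
  · unfold Matrix.IsHermitian
    rw [Matrix.conjTranspose_smul, hS.isHermitian.eq]
    simp
  · exact (hS.smul hr).2 hx

lemma auxA_sum_posSemidef {ι : Type*} (s : Finset ι) (X : ι → Matrix (Fin n) (Fin n) ℝ)
    (hX : ∀ k ∈ s, (X k).PosSemidef) : (∑ k ∈ s, X k).PosSemidef := by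
  classical
  induction s using Finset.induction_on with
  | empty => simpa using Matrix.PosSemidef.zero
  | insert _ _ h ih =>
    rw [Finset.sum_insert h]
    exact (hX _ (Finset.mem_insert_self _ _)).add
      (ih fun k hk => hX k (Finset.mem_insert_of_mem hk))

lemma auxA_key {A W : Matrix (Fin n) (Fin n) ℝ} (hA : A.PosDef) (hW : W.PosSemidef)
    (Q : Matrix (Fin n) (Fin n) ℝ) :
    (Q * hW.sqrt).trace + (hW.sqrt * Qᴴ).trace - (Q * A * Qᴴ).trace ≤ (W * A⁻¹).trace := by
  set R := hW.sqrt with hRdef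
  have hdet : IsUnit A.det := isUnit_iff_ne_zero.2 hA.det_pos.ne'
  have hA1 : A * A⁻¹ = 1 := Matrix.mul_nonsing_inv A hdet
  have hA2 : A⁻¹ * A = 1 := Matrix.nonsing_inv_mul A hdet
  have hAH : Aᴴ = A := hA.isHermitian.eq
  have hRH : Rᴴ = R := hW.posSemidef_sqrt.isHermitian.eq
  have hC := auxA_trace_nonneg ((hA.inv.posSemidef).mul_mul_conjTranspose_same (R - Q * A))
  have hexp : (R - Q * A) * A⁻¹ * (R - Q * A)ᴴ
      = R * A⁻¹ * R - R * Qᴴ - Q * R + Q * A * Qᴴ := by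
    rw [Matrix.conjTranspose_sub, Matrix.conjTranspose_mul, hAH, hRH]
    simp only [Matrix.sub_mul, Matrix.mul_sub]
    have e1 : R * A⁻¹ * (A * Qᴴ) = R * Qᴴ := by
      rw [Matrix.mul_assoc R, ← Matrix.mul_assoc A⁻¹, hA2, Matrix.one_mul]
    have e2 : Q * A * A⁻¹ * R = Q * R := by
      rw [Matrix.mul_assoc Q A A⁻¹, hA1, Matrix.mul_one]
    have e3 : Q * A * A⁻¹ * (A * Qᴴ) = Q * A * Qᴴ := by
      rw [Matrix.mul_assoc Q A A⁻¹, hA1, Matrix.mul_one, ← Matrix.mul_assoc]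
    rw [e1, e2, e3]
    abel
  rw [hexp] at hC
  rw [Matrix.trace_add, Matrix.trace_sub, Matrix.trace_sub] at hC
  have htr : (R * A⁻¹ * R).trace = (W * A⁻¹).trace := by
    rw [Matrix.trace_mul_cycle, hW.sqrt_mul_self]
  linarith [hC, htr.le, htr.ge]

lemma auxA_conj_posDef {S W : Matrix (Fin n) (Fin n) ℝ} (hS : S.PosDef) (hW : W.PosDef)
    (hH : (S⁻¹ * W * S⁻¹).IsHermitian) : (S⁻¹ * W * S⁻¹).PosDef := by
  refine Matrix.PosDef.of_dotProduct_mulVec_pos hH fun ⦃x⦄ hx => ?_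
  have hdet : IsUnit S.det := isUnit_iff_ne_zero.2 hS.det_pos.ne'
  have hS1 : S * S⁻¹ = 1 := Matrix.mul_nonsing_inv S hdet
  set y := S⁻¹ *ᵥ x with hy
  have hy0 : y ≠ 0 := by
    intro h
    apply hx
    have hxy : S *ᵥ y = x := by rw [hy, Matrix.mulVec_mulVec, hS1, Matrix.one_mulVec]
    rw [h, Matrix.mulVec_zero] at hxy
    exact hxy.symm
  have hmv : (S⁻¹ * W * S⁻¹) *ᵥ x = S⁻¹ *ᵥ (W *ᵥ y) := by
    rw [hy, ← Matrix.mulVec_mulVec, ← Matrix.mulVec_mulVec]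
  rw [hmv]
  have hstep : dotProduct (star x) (S⁻¹ *ᵥ (W *ᵥ y))
      = dotProduct (star y) (W *ᵥ y) := by
    rw [Matrix.dotProduct_mulVec]
    congr 1
    rw [hy, Matrix.star_mulVec, hS.inv.isHermitian.eq]
  rw [hstep]
  exact hW.dotProduct_mulVec_pos hy0

end Aux

set_option maxHeartbeats 1600000 in
theorem stmt_11 (n T : ℕ) (hn : 1 ≤ n) (hT : 1 ≤ T)
    (S W : Matrix (Fin n) (Fin n) ℝ) (hS : S.PosDef) (hW : W.PosDef)
    (hM : (S⁻¹ * W * S⁻¹).IsHermitian) (lam c : ℝ)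
    (hlam : lam = ⨆ i, hM.eigenvalues i)
    (hc : c = 1 / ((∑ t ∈ Finset.Icc 1 T, (1:ℝ)/(t:ℝ)^2) * lam))
    (X : ℕ → Matrix (Fin n) (Fin n) ℝ)
    (hX : ∀ t ∈ Finset.Icc 1 T, (X t).PosSemidef) :
    (2 - c) * c * (∑ t ∈ Finset.Icc 1 T, (1:ℝ)/(t:ℝ)) * (W * S⁻¹).trace
    ≤ ∑ t ∈ Finset.Icc 1 T,
        ((W * ((∑ k ∈ Finset.Icc 1 t, X k) + (t:ℝ) • S)⁻¹).trace + (X t).trace) := by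
  classical
  have hdetS : IsUnit S.det := isUnit_iff_ne_zero.2 hS.det_pos.ne'
  have hS1 : S⁻¹ * S = 1 := Matrix.nonsing_inv_mul S hdetS
  have hSiH : S⁻¹ᴴ = S⁻¹ := hS.inv.isHermitian.eq
  set R := hW.posSemidef.sqrt with hRdef
  have hRH : Rᴴ = R := hW.posSemidef.posSemidef_sqrt.isHermitian.eq
  have hRR : R * R = W := hW.posSemidef.sqrt_mul_self
  set M' := S⁻¹ * W * S⁻¹ with hM'def
  have hM'pd : M'.PosDef := auxA_conj_posDef hS hW hM
  set J := (W * S⁻¹).trace with hJdef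
  have hJ0 : 0 ≤ J := auxA_trace_mul_nonneg hW.posSemidef hS.inv.posSemidef
  set β := ∑ t ∈ Finset.Icc 1 T, (1:ℝ)/(t:ℝ)^2 with hβdef
  set α := ∑ t ∈ Finset.Icc 1 T, (1:ℝ)/(t:ℝ) with hαdef
  have hβpos : 0 < β := by
    refine Finset.sum_pos' (fun i _ => by positivity)
      ⟨1, Finset.mem_Icc.2 ⟨le_refl 1, hT⟩, by norm_num⟩
  have hαnn : 0 ≤ α := Finset.sum_nonneg fun i _ => by positivity
  have heig : ∀ i, hM.eigenvalues i ≤ lam := fun i => by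
    rw [hlam]
    exact le_ciSup (Set.Finite.bddAbove (Set.finite_range _)) i
  have hlampos : 0 < lam := by
    have h1 : 0 < hM.eigenvalues ⟨0, hn⟩ := hM'pd.eigenvalues_pos ⟨0, hn⟩
    exact lt_of_lt_of_le h1 (heig _)
  have hlamI : (lam • (1 : Matrix (Fin n) (Fin n) ℝ) - M').PosSemidef :=
    auxA_smul_sub_posSemidef hM heig
  have hcpos : 0 < c := by rw [hc]; positivity
  have hblc : β * lam = 1 / c := by rw [hc]; field_simp
  set a := min c 1 with hadef
  have ha0 : 0 < a := lt_min hcpos one_pos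
  have ha1 : a ≤ 1 := min_le_right _ _
  have hac : a ≤ c := min_le_left _ _
  have ha2c : a ^ 2 ≤ c := by nlinarith
  have ha2 : a ^ 2 * (β * lam) ≤ 1 := by
    rw [hblc, mul_one_div]
    exact (div_le_one hcpos).2 ha2c
  have h2ac : (2 - c) * c ≤ (2 - a) * a := by
    rcases le_total c 1 with h | h
    · rw [hadef, min_eq_left h]
    · rw [hadef, min_eq_right h]
      nlinarith [sq_nonneg (1 - c)]
  have hxnn : ∀ k ∈ Finset.Icc 1 T, 0 ≤ (X k).trace :=
    fun k hk => auxA_trace_nonneg (hX k hk)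
  have hmnn : ∀ k ∈ Finset.Icc 1 T, 0 ≤ (M' * X k).trace :=
    fun k hk => auxA_trace_mul_nonneg hM'pd.posSemidef (hX k hk)
  have hmle : ∀ k ∈ Finset.Icc 1 T, (M' * X k).trace ≤ lam * (X k).trace := by
    intro k hk
    have h0 := auxA_trace_mul_nonneg hlamI (hX k hk)
    rw [Matrix.sub_mul, Matrix.smul_mul, Matrix.one_mul, Matrix.trace_sub,
      Matrix.trace_smul] at h0
    rw [smul_eq_mul] at h0
    linarith
  -- the per-step inequality
  have hper : ∀ t ∈ Finset.Icc 1 T,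
      (2 * a - a ^ 2) * (1 / (t : ℝ)) * J
          - a ^ 2 * ((1 / (t : ℝ) ^ 2) * ∑ k ∈ Finset.Icc 1 t, (M' * X k).trace)
        ≤ (W * ((∑ k ∈ Finset.Icc 1 t, X k) + (t : ℝ) • S)⁻¹).trace := by
    intro t ht
    obtain ⟨ht1, htT⟩ := Finset.mem_Icc.1 ht
    have htR : (0 : ℝ) < t := by exact_mod_cast ht1
    set A := (∑ k ∈ Finset.Icc 1 t, X k) + (t : ℝ) • S with hAdef
    have hApd : A.PosDef := by
      refine Matrix.PosDef.posSemidef_add ?_ (auxA_smul_posDef hS htR)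
      exact auxA_sum_posSemidef _ _ fun k hk =>
        hX k (Finset.Icc_subset_Icc_right htT hk)
    set Q := (a / (t : ℝ)) • (R * S⁻¹) with hQdef
    have hkey := auxA_key hApd hW.posSemidef Q
    have hQH : Qᴴ = (a / (t : ℝ)) • (S⁻¹ * R) := by
      rw [hQdef, Matrix.conjTranspose_smul, Matrix.conjTranspose_mul, hRH, hSiH,
        star_trivial]
    have htr0 : (R * S⁻¹ * R).trace = J := by
      rw [Matrix.trace_mul_cycle, hRR]
    have htr1 : (Q * R).trace = (a / (t : ℝ)) * J := by
      rw [hQdef, Matrix.smul_mul, Matrix.trace_smul, htr0, smul_eq_mul]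
    have htr2 : (R * Qᴴ).trace = (a / (t : ℝ)) * J := by
      rw [hQH, Matrix.mul_smul, Matrix.trace_smul, ← Matrix.mul_assoc, htr0, smul_eq_mul]
    have htr3 : (Q * A * Qᴴ).trace = (a / (t : ℝ)) ^ 2 * (M' * A).trace := by
      rw [hQdef, hQH, Matrix.smul_mul, Matrix.smul_mul, Matrix.mul_smul,
        Matrix.trace_smul, Matrix.trace_smul, smul_eq_mul, smul_eq_mul]
      have hid : ((S⁻¹ * R) * (R * S⁻¹ * A)).trace = (M' * A).trace := by
        congr 1
        rw [hM'def]
        simp only [Matrix.mul_assoc]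
        congr 1
        rw [← Matrix.mul_assoc, hRR]
      rw [Matrix.trace_mul_comm, hid]
      ring
    have htr4 : (M' * A).trace
        = (∑ k ∈ Finset.Icc 1 t, (M' * X k).trace) + (t : ℝ) * J := by
      rw [hAdef, Matrix.mul_add, Matrix.trace_add, Finset.mul_sum, Matrix.trace_sum]
      congr 1
      have hMS : M' * ((t : ℝ) • S) = (t : ℝ) • (S⁻¹ * W) := by
        rw [mul_smul_comm, hM'def, Matrix.mul_assoc, hS1, Matrix.mul_one]
      rw [hMS, Matrix.trace_smul, smul_eq_mul, Matrix.trace_mul_comm, hJdef]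
    rw [htr1, htr2, htr3, htr4] at hkey
    refine le_trans (le_of_eq ?_) hkey
    field_simp
    ring
  -- sum over t
  have hsum1 := Finset.sum_le_sum hper
  set D := ∑ t ∈ Finset.Icc 1 T,
      (1 / (t : ℝ) ^ 2) * ∑ k ∈ Finset.Icc 1 t, (M' * X k).trace with hDdef
  have e1 : (2 * a - a ^ 2) * α * J
      = ∑ t ∈ Finset.Icc 1 T, (2 * a - a ^ 2) * (1 / (t : ℝ)) * J := by
    rw [hαdef, Finset.mul_sum, Finset.sum_mul]
  have e2 : a ^ 2 * D = ∑ t ∈ Finset.Icc 1 T,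
      a ^ 2 * ((1 / (t : ℝ) ^ 2) * ∑ k ∈ Finset.Icc 1 t, (M' * X k).trace) := by
    rw [hDdef, Finset.mul_sum]
  rw [Finset.sum_sub_distrib, ← e1, ← e2] at hsum1
  have hswap : D = ∑ k ∈ Finset.Icc 1 T,
      (∑ t ∈ Finset.Icc k T, (1 / (t : ℝ) ^ 2)) * (M' * X k).trace := by
    rw [hDdef]
    simp only [Finset.mul_sum, Finset.sum_mul]
    exact Finset.sum_comm' fun x y => by simp only [Finset.mem_Icc]; omega
  have hDle : D ≤ β * lam * ∑ k ∈ Finset.Icc 1 T, (X k).trace := by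
    rw [hswap, Finset.mul_sum]
    refine Finset.sum_le_sum fun k hk => ?_
    obtain ⟨hk1, hkT⟩ := Finset.mem_Icc.1 hk
    have hsub : (∑ t ∈ Finset.Icc k T, (1 / (t : ℝ) ^ 2)) ≤ β := by
      rw [hβdef]
      refine Finset.sum_le_sum_of_subset_of_nonneg
        (Finset.Icc_subset_Icc hk1 le_rfl) fun i _ _ => by positivity
    calc (∑ t ∈ Finset.Icc k T, (1 / (t : ℝ) ^ 2)) * (M' * X k).trace
        ≤ β * (M' * X k).trace := mul_le_mul_of_nonneg_right hsub (hmnn k hk)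
      _ ≤ β * (lam * (X k).trace) :=
          mul_le_mul_of_nonneg_left (hmle k hk) hβpos.le
      _ = β * lam * (X k).trace := by ring
  set Xs := ∑ k ∈ Finset.Icc 1 T, (X k).trace with hXsdef
  have hXs0 : 0 ≤ Xs := Finset.sum_nonneg hxnn
  rw [Finset.sum_add_distrib]
  have hαJ : 0 ≤ α * J := mul_nonneg hαnn hJ0
  have k1 : (2 - c) * c * (α * J) ≤ (2 - a) * a * (α * J) :=
    mul_le_mul_of_nonneg_right h2ac hαJ
  have k2 : a ^ 2 * D ≤ a ^ 2 * (β * lam * Xs) :=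
    mul_le_mul_of_nonneg_left hDle (sq_nonneg a)
  have k3 : a ^ 2 * (β * lam) * Xs ≤ 1 * Xs :=
    mul_le_mul_of_nonneg_right ha2 hXs0
  clear_value R M' J β α a D Xs
  linarith [hsum1, k1, k2, k3]
end

section
/- Let W ≻ 0 be an n×n real symmetric matrix with positive definite square root W̃, T ≥ 1, and S = 0. Then the minimum of J_T = ∑_{t=1}^T [tr(W X̄_t⁻¹) + tr(X_t)] over sequences X₁,…,X_T with X₁ ≻ 0 and X_t ⪰ 0 for t ≥ 2, where X̄_t = ∑_{k=1}^t X_k, equals 2√T · tr(W̃), attained by X₁ = √T·W̃, X_t = 0 for t ≥ 2. -/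
open Matrix BigOperators Finset Real

lemma aux_trace_nonneg_s17 {n : ℕ} {M : Matrix (Fin n) (Fin n) ℝ} (h : M.PosSemidef) :
    0 ≤ M.trace := by
  rw [Matrix.trace]
  apply Finset.sum_nonneg
  intro i _
  have := h.dotProduct_mulVec_nonneg (Pi.single i 1)
  simpa [dotProduct, Matrix.mulVec, Pi.single_apply, Finset.sum_ite_eq] using this

lemma aux_smul_posDef {n : ℕ} {M : Matrix (Fin n) (Fin n) ℝ} (h : M.PosDef) {c : ℝ}
    (hc : 0 < c) : (c • M).PosDef := by
  constructor
  · unfold Matrix.IsHermitian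
    rw [conjTranspose_smul, h.1.eq]
    simp
  · intro x hx
    have := h.2 hx
    simp only [Matrix.smul_apply, smul_eq_mul]
    have e : ∀ a b d : ℝ, star a * (c * b) * d = c * (star a * b * d) := fun a b d => by ring
    simp only [e, ← Finsupp.mul_sum]
    exact mul_pos hc this

lemma aux_key_s17 {n : ℕ} {A Wt : Matrix (Fin n) (Fin n) ℝ} (hA : A.PosDef) (hWt : Wt.PosDef)
    {c : ℝ} (hc : 0 < c) :
    2 * c * Wt.trace - c ^ 2 * A.trace ≤ (Wt * Wt * A⁻¹).trace := by
  have hdet : IsUnit A.det := isUnit_iff_ne_zero.mpr hA.det_pos.ne'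
  set M : Matrix (Fin n) (Fin n) ℝ := Wt - c • A with hM
  have hMh : Mᴴ = M := by
    rw [hM, conjTranspose_sub, conjTranspose_smul, hWt.1.eq, hA.1.eq]
    simp
  have hps : (M * A⁻¹ * Mᴴ).PosSemidef := hA.inv.posSemidef.mul_mul_conjTranspose_same M
  have hexp : M * A⁻¹ * Mᴴ = Wt * A⁻¹ * Wt - c • Wt - c • Wt + (c * c) • A := by
    rw [hMh, hM]
    rw [sub_mul, sub_mul, mul_sub, mul_sub]
    rw [Matrix.smul_mul, Matrix.smul_mul, Matrix.mul_smul, Matrix.mul_smul]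
    rw [Matrix.mul_nonsing_inv _ hdet, Matrix.mul_assoc Wt A⁻¹ A, Matrix.nonsing_inv_mul _ hdet]
    simp [smul_smul, Matrix.mul_one, Matrix.one_mul, Matrix.smul_mul, Matrix.mul_assoc]
    abel
  have h0 := aux_trace_nonneg_s17 hps
  rw [hexp] at h0
  have hcyc : (Wt * A⁻¹ * Wt).trace = (Wt * Wt * A⁻¹).trace := Matrix.trace_mul_cycle Wt A⁻¹ Wt
  simp only [Matrix.trace_add, Matrix.trace_sub, Matrix.trace_smul, smul_eq_mul] at h0
  nlinarith [h0]

theorem stmt_17 (n T : ℕ) (hT : 1 ≤ T) (W Wt : Matrix (Fin n) (Fin n) ℝ)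
    (hW : W.PosDef) (hWt : Wt.PosDef) (hWtsq : Wt * Wt = W) :
    IsLeast {J : ℝ | ∃ X : ℕ → Matrix (Fin n) (Fin n) ℝ,
        (X 1).PosDef ∧ (∀ t, 2 ≤ t → (X t).PosSemidef) ∧
        J = ∑ t ∈ Finset.Icc 1 T,
          ((W * (∑ k ∈ Finset.Icc 1 t, X k)⁻¹).trace + (X t).trace)}
      (2 * Real.sqrt T * Wt.trace)
    ∧ ∑ t ∈ Finset.Icc 1 T,
        ((W * (∑ k ∈ Finset.Icc 1 t,
            (fun s : ℕ => if s = 1 then Real.sqrt T • Wt else 0) k)⁻¹).trace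
          + ((fun s : ℕ => if s = 1 then Real.sqrt T • Wt else 0) t).trace)
      = 2 * Real.sqrt T * Wt.trace := by
  have hTpos : (0:ℝ) < T := by exact_mod_cast hT
  have hs : Real.sqrt T * Real.sqrt T = T := Real.mul_self_sqrt hTpos.le
  have hspos : (0:ℝ) < Real.sqrt T := Real.sqrt_pos.mpr hTpos
  have hWtdet : IsUnit Wt.det := isUnit_iff_ne_zero.mpr hWt.det_pos.ne'
  -- the value at the candidate optimum
  have hval : ∑ t ∈ Finset.Icc 1 T,
        ((W * (∑ k ∈ Finset.Icc 1 t,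
            (fun s : ℕ => if s = 1 then Real.sqrt T • Wt else 0) k)⁻¹).trace
          + ((fun s : ℕ => if s = 1 then Real.sqrt T • Wt else 0) t).trace)
      = 2 * Real.sqrt T * Wt.trace := by
    have hsum : ∀ t ∈ Finset.Icc 1 T, (∑ k ∈ Finset.Icc 1 t,
        (fun s : ℕ => if s = 1 then Real.sqrt T • Wt else 0) k) = Real.sqrt T • Wt := by
      intro t ht
      rw [Finset.sum_ite_eq' (Finset.Icc 1 t) 1 (fun _ => Real.sqrt T • Wt)]
      simp only [Finset.mem_Icc]
      rw [if_pos ⟨le_refl 1, (Finset.mem_Icc.mp ht).1⟩]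
    have hinv : (Real.sqrt T • Wt)⁻¹ = (Real.sqrt T)⁻¹ • Wt⁻¹ := by
      apply Matrix.inv_eq_right_inv
      rw [Matrix.smul_mul, Matrix.mul_smul, smul_smul, Matrix.mul_nonsing_inv _ hWtdet,
        mul_inv_cancel₀ hspos.ne']
      simp
    have htr : (W * ((Real.sqrt T)⁻¹ • Wt⁻¹)).trace = (Real.sqrt T)⁻¹ * Wt.trace := by
      rw [Matrix.mul_smul, Matrix.trace_smul, ← hWtsq, Matrix.mul_assoc,
        Matrix.mul_nonsing_inv _ hWtdet, Matrix.mul_one]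
      simp
    rw [Finset.sum_congr rfl (fun t ht => by rw [hsum t ht, hinv, htr])]
    rw [Finset.sum_add_distrib, Finset.sum_const, Nat.card_Icc]
    simp only [apply_ite Matrix.trace, Matrix.trace_zero, Matrix.trace_smul, smul_eq_mul]
    rw [Finset.sum_ite_eq' (Finset.Icc 1 T) 1 (fun _ => Real.sqrt T * Wt.trace)]
    simp only [Finset.mem_Icc, le_refl, true_and, hT, if_true, nsmul_eq_mul, Nat.add_sub_cancel]
    have h1 : (T : ℝ) * (Real.sqrt T)⁻¹ = Real.sqrt T := by
      field_simp; rw [sq, hs]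
    rw [← mul_assoc, h1]
    ring
  refine ⟨⟨⟨fun s : ℕ => if s = 1 then Real.sqrt T • Wt else 0, ?_, ?_, hval.symm⟩, ?_⟩, hval⟩
  · simp only [if_pos rfl]
    exact aux_smul_posDef hWt hspos
  · intro t ht
    have h1 : t ≠ 1 := by omega
    simp only [h1, if_false]
    exact Matrix.PosSemidef.zero
  · -- lower bound
    rintro J ⟨X, hX1, hX2, rfl⟩
    set c : ℝ := (Real.sqrt T)⁻¹ with hc
    have hcpos : 0 < c := inv_pos.mpr hspos
    set a : ℕ → ℝ := fun t => (X t).trace with ha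
    have hXpsd : ∀ t, 1 ≤ t → (X t).PosSemidef := by
      intro t ht
      rcases eq_or_lt_of_le ht with h | h
      · rw [← h]; exact hX1.posSemidef
      · exact hX2 t h
    have hanneg : ∀ t, 1 ≤ t → 0 ≤ a t := fun t ht => aux_trace_nonneg_s17 (hXpsd t ht)
    have hSpd : ∀ t ∈ Finset.Icc 1 T, (∑ k ∈ Finset.Icc 1 t, X k).PosDef := by
      intro t ht
      have ht1 : 1 ≤ t := (Finset.mem_Icc.mp ht).1
      have hins : Finset.Icc 1 t = insert 1 (Finset.Icc 2 t) := by
        ext x; simp only [Finset.mem_Icc, Finset.mem_insert]; omega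
      rw [hins, Finset.sum_insert (by simp)]
      refine hX1.add_posSemidef ?_
      refine Finset.sum_induction X _ (fun x y hx hy => hx.add hy) Matrix.PosSemidef.zero ?_
      intro k hk
      exact hX2 k (Finset.mem_Icc.mp hk).1
    -- pointwise bound
    have hpw : ∀ t ∈ Finset.Icc 1 T,
        2 * c * Wt.trace - c ^ 2 * (∑ k ∈ Finset.Icc 1 t, a k) + a t
          ≤ (W * (∑ k ∈ Finset.Icc 1 t, X k)⁻¹).trace + a t := by
      intro t ht
      have := aux_key_s17 (hSpd t ht) hWt hcpos
      rw [hWtsq] at this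
      have htr : (∑ k ∈ Finset.Icc 1 t, X k).trace = ∑ k ∈ Finset.Icc 1 t, a k :=
        Matrix.trace_sum _ _
      linarith [this, htr ▸ this]
    have hsum_le := Finset.sum_le_sum hpw
    -- bound the inner partial sums
    have hinner : ∀ t ∈ Finset.Icc 1 T,
        (∑ k ∈ Finset.Icc 1 t, a k) ≤ ∑ k ∈ Finset.Icc 1 T, a k := by
      intro t ht
      apply Finset.sum_le_sum_of_subset_of_nonneg
      · exact Finset.Icc_subset_Icc_right (Finset.mem_Icc.mp ht).2
      · intro k hk _
        exact hanneg k (Finset.mem_Icc.mp hk).1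
    set SA : ℝ := ∑ k ∈ Finset.Icc 1 T, a k with hSA
    have hsum2 : ∑ t ∈ Finset.Icc 1 T, (∑ k ∈ Finset.Icc 1 t, a k) ≤ T * SA := by
      calc ∑ t ∈ Finset.Icc 1 T, (∑ k ∈ Finset.Icc 1 t, a k)
          ≤ ∑ _t ∈ Finset.Icc 1 T, SA := Finset.sum_le_sum hinner
        _ = T * SA := by rw [Finset.sum_const, Nat.card_Icc]; simp [nsmul_eq_mul]
    -- assemble
    have hLHS : ∑ t ∈ Finset.Icc 1 T,
        (2 * c * Wt.trace - c ^ 2 * (∑ k ∈ Finset.Icc 1 t, a k) + a t)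
        = T * (2 * c * Wt.trace)
          - c ^ 2 * (∑ t ∈ Finset.Icc 1 T, (∑ k ∈ Finset.Icc 1 t, a k)) + SA := by
      rw [Finset.sum_add_distrib, Finset.sum_sub_distrib, Finset.sum_const, Nat.card_Icc,
        ← Finset.mul_sum]
      simp [nsmul_eq_mul, hSA]
    rw [hLHS] at hsum_le
    have h1 : (T : ℝ) * c = Real.sqrt T := by
      rw [hc]; field_simp; rw [sq, hs]
    have h2 : c ^ 2 * (T : ℝ) = 1 := by
      rw [hc]; field_simp; rw [sq, hs]
    have h3 : c ^ 2 * (∑ t ∈ Finset.Icc 1 T, (∑ k ∈ Finset.Icc 1 t, a k)) ≤ SA := by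
      calc c ^ 2 * (∑ t ∈ Finset.Icc 1 T, (∑ k ∈ Finset.Icc 1 t, a k))
          ≤ c ^ 2 * (T * SA) := by
            apply mul_le_mul_of_nonneg_left hsum2 (by positivity)
        _ = SA := by rw [← mul_assoc, h2, one_mul]
    have h4 : (T : ℝ) * (2 * c * Wt.trace) = 2 * Real.sqrt T * Wt.trace := by
      rw [show (T : ℝ) * (2 * c * Wt.trace) = 2 * ((T : ℝ) * c) * Wt.trace by ring, h1]
    show 2 * Real.sqrt T * Wt.trace ≤
      ∑ t ∈ Finset.Icc 1 T, ((W * (∑ k ∈ Finset.Icc 1 t, X k)⁻¹).trace + a t)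
    linarith [hsum_le, h3, h4]
end
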